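/- (Theorem 1) Let y = A·x_S where x_S ∈ ℝⁿ is K-sparse with support S, and A satisfies the RIP of order 3K with constant δ_{3K} and of order 4K with constant δ_{4K} < 1, with ρ_{4K} < 1. Let (x^n)_{n ≥ 0} be CoSaMP iterates starting from x^0 = 0, each obtained from the previous by one CoSaMP iteration. Then x^{⌈cK⌉} = x_S, where c = ln(4/ρ_{4K}²)/ln(1/ρ_{4K}²). -/

import Mathlib

open Finset

/-- Euclidean norm of a vector. -/
noncomputable def euclNorm {d : ℕ} (x : Fin d → ℝ) : ℝ := Real.sqrt (∑ i, x i ^ 2)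

/-- The support of a vector, as a finite set of indices. -/
noncomputable def supp {d : ℕ} (x : Fin d → ℝ) : Finset (Fin d) :=
  Finset.univ.filter (fun i => x i ≠ 0)

/-- `restrict x T` agrees with `x` on `T` and is zero outside `T`. -/
def restrict {d : ℕ} (x : Fin d → ℝ) (T : Finset (Fin d)) : Fin d → ℝ :=
  fun i => if i ∈ T then x i else 0

/-- `A` satisfies the Restricted Isometry Property of order `L` with constant `δ ∈ (0,1)`. -/
def RIP {m d : ℕ} (A : Matrix (Fin m) (Fin d) ℝ) (L : ℕ) (δ : ℝ) : Prop :=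
  0 < δ ∧ δ < 1 ∧
  ∀ x : Fin d → ℝ, (supp x).card ≤ L →
    (1 - δ) * euclNorm x ^ 2 ≤ euclNorm (A.mulVec x) ^ 2 ∧
    euclNorm (A.mulVec x) ^ 2 ≤ (1 + δ) * euclNorm x ^ 2

/-- `u` is the least-squares solution on the index set `U`: it is supported on `U` and
`y - A u` is orthogonal to `A z` whenever `z` is supported on `U`. -/
def LeastSq {m d : ℕ} (A : Matrix (Fin m) (Fin d) ℝ) (y : Fin m → ℝ)
    (U : Finset (Fin d)) (u : Fin d → ℝ) : Prop :=
  supp u ⊆ U ∧ ∀ z : Fin d → ℝ, supp z ⊆ U →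
    ∑ i, (y i - A.mulVec u i) * A.mulVec z i = 0

/-- One CoSaMP iteration with sparsity `K`, mapping the iterate `xprev` to `xnext`:
identification (`h`, the `2K` largest residual correlations), augmentation
(`supp xprev ∪ h`), least-squares estimation (`u`), and hard-thresholding update. -/
def CoSaMPStep {m d : ℕ} (K : ℕ) (A : Matrix (Fin m) (Fin d) ℝ) (y : Fin m → ℝ)
    (xprev xnext : Fin d → ℝ) : Prop :=
  ∃ (h Snext : Finset (Fin d)) (u : Fin d → ℝ),
    h.card = 2 * K ∧
    (∀ i ∈ h, ∀ j ∉ h,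
      |A.transpose.mulVec (y - A.mulVec xprev) j| ≤
        |A.transpose.mulVec (y - A.mulVec xprev) i|) ∧
    LeastSq A y (supp xprev ∪ h) u ∧
    Snext ⊆ supp xprev ∪ h ∧ Snext.card = K ∧
    (∀ i ∈ Snext, ∀ j ∉ Snext, |u j| ≤ |u i|) ∧
    xnext = restrict u Snext

-- ## auxiliary development


namespace CoSaMPAux

variable {d m : ℕ}

noncomputable def ip (x y : Fin d → ℝ) : ℝ := ∑ i, x i * y i

noncomputable def nsq (x : Fin d → ℝ) : ℝ := ∑ i, x i ^ 2

lemma nsq_nonneg (x : Fin d → ℝ) : 0 ≤ nsq x :=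
  Finset.sum_nonneg fun i _ => sq_nonneg _

lemma euclNorm_sq (x : Fin d → ℝ) : euclNorm x ^ 2 = nsq x :=
  Real.sq_sqrt (nsq_nonneg x)

lemma euclNorm_nonneg (x : Fin d → ℝ) : 0 ≤ euclNorm x := Real.sqrt_nonneg _

lemma euclNorm_eq_zero_iff (x : Fin d → ℝ) : euclNorm x = 0 ↔ x = 0 := by
  unfold euclNorm
  rw [show (∑ i, x i ^ 2) = nsq x from rfl, Real.sqrt_eq_zero (nsq_nonneg x)]
  constructor
  · intro h
    funext i
    have := (Finset.sum_eq_zero_iff_of_nonneg (fun i _ => sq_nonneg (x i))).1 h i (mem_univ i)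
    exact pow_eq_zero_iff (n := 2) (by norm_num) |>.1 this
  · intro h; subst h; simp [nsq]

lemma nsq_eq_zero_iff (x : Fin d → ℝ) : nsq x = 0 ↔ x = 0 := by
  constructor
  · intro h
    funext i
    have := (Finset.sum_eq_zero_iff_of_nonneg (fun i _ => sq_nonneg (x i))).1 h i (mem_univ i)
    exact pow_eq_zero_iff (n := 2) (by norm_num) |>.1 this
  · intro h; subst h; simp [nsq]

lemma mem_supp {x : Fin d → ℝ} {i : Fin d} : i ∈ supp x ↔ x i ≠ 0 := by
  simp [supp]

lemma not_mem_supp {x : Fin d → ℝ} {i : Fin d} (h : i ∉ supp x) : x i = 0 := by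
  by_contra hc; exact h (mem_supp.2 hc)

lemma supp_zero : supp (0 : Fin d → ℝ) = ∅ := by
  ext i; simp [supp]

lemma supp_add_subset (x y : Fin d → ℝ) : supp (x + y) ⊆ supp x ∪ supp y := by
  intro i hi
  rw [mem_supp] at hi
  rw [Finset.mem_union, mem_supp, mem_supp]
  by_contra hc
  push_neg at hc
  exact hi (by simp [hc.1, hc.2])

lemma supp_sub_subset (x y : Fin d → ℝ) : supp (x - y) ⊆ supp x ∪ supp y := by
  intro i hi
  rw [mem_supp] at hi
  rw [Finset.mem_union, mem_supp, mem_supp]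
  by_contra hc
  push_neg at hc
  exact hi (by simp [hc.1, hc.2])

lemma supp_smul_subset (c : ℝ) (x : Fin d → ℝ) : supp (c • x) ⊆ supp x := by
  intro i hi
  rw [mem_supp] at hi ⊢
  intro h
  exact hi (by simp [h])

lemma supp_neg (x : Fin d → ℝ) : supp (-x) = supp x := by
  ext i; simp [supp]

lemma supp_restrict_subset (x : Fin d → ℝ) (T : Finset (Fin d)) : supp (restrict x T) ⊆ T := by
  intro i hi
  rw [mem_supp] at hi
  by_contra hc
  exact hi (by simp [_root_.restrict, hc])

end CoSaMPAux

namespace CoSaMPAux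

variable {d m : ℕ}

lemma ip_comm (x y : Fin d → ℝ) : ip x y = ip y x := by
  unfold ip; congr 1; funext i; ring

lemma ip_add_left (x y z : Fin d → ℝ) : ip (x + y) z = ip x z + ip y z := by
  unfold ip; rw [← Finset.sum_add_distrib]; congr 1; funext i; simp [Pi.add_apply]; ring

lemma ip_sub_left (x y z : Fin d → ℝ) : ip (x - y) z = ip x z - ip y z := by
  unfold ip; rw [← Finset.sum_sub_distrib]; congr 1; funext i; simp [Pi.sub_apply]; ring

lemma ip_smul_left (c : ℝ) (x z : Fin d → ℝ) : ip (c • x) z = c * ip x z := by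
  unfold ip; rw [Finset.mul_sum]; congr 1; funext i; simp [Pi.smul_apply]; ring

lemma ip_smul_right (c : ℝ) (x z : Fin d → ℝ) : ip x (c • z) = c * ip x z := by
  unfold ip; rw [Finset.mul_sum]; congr 1; funext i; simp [Pi.smul_apply]; ring

lemma ip_neg_right (x z : Fin d → ℝ) : ip x (-z) = - ip x z := by
  unfold ip; rw [← Finset.sum_neg_distrib]; congr 1; funext i; simp

lemma ip_zero_left (z : Fin d → ℝ) : ip 0 z = 0 := by
  unfold ip; simp

lemma ip_zero_right (z : Fin d → ℝ) : ip z 0 = 0 := by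
  unfold ip; simp

lemma ip_self (x : Fin d → ℝ) : ip x x = nsq x := by
  unfold ip nsq; congr 1; funext i; ring

lemma nsq_add (x y : Fin d → ℝ) : nsq (x + y) = nsq x + 2 * ip x y + nsq y := by
  unfold nsq ip
  rw [Finset.mul_sum, ← Finset.sum_add_distrib, ← Finset.sum_add_distrib]
  congr 1; funext i; simp [Pi.add_apply]; ring

lemma nsq_sub (x y : Fin d → ℝ) : nsq (x - y) = nsq x - 2 * ip x y + nsq y := by
  unfold nsq ip
  rw [Finset.mul_sum, ← Finset.sum_sub_distrib, ← Finset.sum_add_distrib]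
  congr 1; funext i; simp [Pi.sub_apply]; ring

lemma nsq_smul (c : ℝ) (x : Fin d → ℝ) : nsq (c • x) = c ^ 2 * nsq x := by
  unfold nsq; rw [Finset.mul_sum]; congr 1; funext i; simp [Pi.smul_apply]; ring

/-- sum of squares over a finset -/
noncomputable def ssq (T : Finset (Fin d)) (x : Fin d → ℝ) : ℝ := ∑ i ∈ T, x i ^ 2

lemma ssq_nonneg (T : Finset (Fin d)) (x : Fin d → ℝ) : 0 ≤ ssq T x :=
  Finset.sum_nonneg fun i _ => sq_nonneg _

lemma ssq_le_ssq_of_subset {T T' : Finset (Fin d)} (h : T ⊆ T') (x : Fin d → ℝ) :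
    ssq T x ≤ ssq T' x :=
  Finset.sum_le_sum_of_subset_of_nonneg h (fun i _ _ => sq_nonneg _)

lemma nsq_eq_ssq_add_compl (T : Finset (Fin d)) (x : Fin d → ℝ) :
    nsq x = ssq T x + ssq Tᶜ x := by
  unfold nsq ssq
  rw [← Finset.sum_add_sum_compl T (fun i => x i ^ 2)]

lemma ssq_restrict (T : Finset (Fin d)) (x : Fin d → ℝ) (W : Finset (Fin d)) (hW : W ⊆ T) :
    ssq W (restrict x T) = ssq W x := by
  unfold ssq
  apply Finset.sum_congr rfl
  intro i hi
  simp [_root_.restrict, hW hi]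

lemma nsq_restrict (T : Finset (Fin d)) (x : Fin d → ℝ) :
    nsq (restrict x T) = ssq T x := by
  rw [nsq_eq_ssq_add_compl T, ssq_restrict T x T (subset_refl T)]
  have : ssq Tᶜ (restrict x T) = 0 := by
    apply Finset.sum_eq_zero
    intro i hi
    have : i ∉ T := by simpa using hi
    simp [_root_.restrict, this]
  rw [this, add_zero]

lemma single_le_ssq {T : Finset (Fin d)} {i : Fin d} (hi : i ∈ T) (x : Fin d → ℝ) :
    x i ^ 2 ≤ ssq T x :=
  Finset.single_le_sum (f := fun j => x j ^ 2) (fun j _ => sq_nonneg _) hi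

/-- if `x` vanishes outside `S`, sums of squares over any superset-structure collapse -/
lemma ssq_of_zero_off {S T : Finset (Fin d)} {x : Fin d → ℝ}
    (hx : ∀ i, i ∉ S → x i = 0) : ssq T x = ssq (S ∩ T) x := by
  unfold ssq
  rw [Finset.sum_subset (Finset.inter_subset_right)]
  intro i hiT hiST
  have : i ∉ S := fun hS => hiST (Finset.mem_inter.2 ⟨hS, hiT⟩)
  simp [hx i this]

/-- comparison of sums: smaller set of elementwise-smaller nonneg values -/
lemma sum_le_sum_of_card_le {c e : Finset (Fin d)} (f : Fin d → ℝ)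
    (hf : ∀ j ∈ e, 0 ≤ f j) (hcard : c.card ≤ e.card)
    (hle : ∀ i ∈ c, ∀ j ∈ e, f i ≤ f j) :
    ∑ i ∈ c, f i ≤ ∑ j ∈ e, f j := by
  rcases Finset.eq_empty_or_nonempty c with rfl | hc
  · simpa using Finset.sum_nonneg hf
  · have he : e.Nonempty := by
      rcases Finset.eq_empty_or_nonempty e with rfl | he
      · exfalso
        simp only [Finset.card_empty, Nat.le_zero, Finset.card_eq_zero] at hcard
        exact hc.ne_empty hcard
      · exact he
    obtain ⟨j₀, hj₀, hmin⟩ := Finset.exists_min_image e f he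
    have h1 : ∑ i ∈ c, f i ≤ c.card * f j₀ := by
      rw [Finset.card_eq_sum_ones c, Nat.cast_sum]
      rw [Finset.sum_mul]
      apply Finset.sum_le_sum
      intro i hi
      simpa using hle i hi j₀ hj₀
    have h2 : (c.card : ℝ) * f j₀ ≤ e.card * f j₀ := by
      apply mul_le_mul_of_nonneg_right _ (hf j₀ hj₀)
      exact_mod_cast hcard
    have h3 : (e.card : ℝ) * f j₀ ≤ ∑ j ∈ e, f j := by
      rw [Finset.card_eq_sum_ones e, Nat.cast_sum, Finset.sum_mul]
      apply Finset.sum_le_sum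
      intro j hj
      simpa using hmin j hj
    linarith

end CoSaMPAux

namespace CoSaMPAux

variable {d m : ℕ}

lemma euclNorm_neg (x : Fin d → ℝ) : euclNorm (-x) = euclNorm x := by
  unfold euclNorm; congr 1; apply Finset.sum_congr rfl; intro i _; simp

lemma mulVec_ip_transpose (A : Matrix (Fin m) (Fin d) ℝ) (v : Fin m → ℝ) (z : Fin d → ℝ) :
    ip (A.transpose.mulVec v) z = ip v (A.mulVec z) := by
  show dotProduct (A.transpose.mulVec v) z = dotProduct v (A.mulVec z)
  rw [Matrix.mulVec_transpose, Matrix.dotProduct_mulVec]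

lemma polar_ub {L : ℕ} {δ : ℝ} {A : Matrix (Fin m) (Fin d) ℝ} (hR : RIP A L δ)
    {x y : Fin d → ℝ} (hcard : (supp x ∪ supp y).card ≤ L) :
    ip (A.mulVec x) (A.mulVec y) ≤ ip x y + δ * (euclNorm x * euclNorm y) := by
  set a := euclNorm y • x with ha
  set b := euclNorm x • y with hb
  set t := euclNorm x * euclNorm y with ht
  have hsupa : supp a ⊆ supp x := supp_smul_subset _ _
  have hsupb : supp b ⊆ supp y := supp_smul_subset _ _
  have hc1 : (supp (a + b)).card ≤ L := by
    refine le_trans (Finset.card_le_card ?_) hcard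
    refine (supp_add_subset a b).trans (Finset.union_subset_union hsupa hsupb)
  have hc2 : (supp (a - b)).card ≤ L := by
    refine le_trans (Finset.card_le_card ?_) hcard
    refine (supp_sub_subset a b).trans (Finset.union_subset_union hsupa hsupb)
  have h1 := (hR.2.2 (a + b) hc1).2
  have h2 := (hR.2.2 (a - b) hc2).1
  rw [euclNorm_sq, euclNorm_sq] at h1 h2
  rw [Matrix.mulVec_add] at h1
  rw [Matrix.mulVec_sub] at h2
  rw [nsq_add, nsq_add] at h1
  rw [nsq_sub, nsq_sub] at h2
  have hnsqa : nsq a = t ^ 2 * (if True then 1 else 0) * 1 ∨ True := Or.inr trivial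
  -- compute the scalar identities
  have ea : nsq a = euclNorm y ^ 2 * nsq x := by rw [ha, nsq_smul]
  have eb : nsq b = euclNorm x ^ 2 * nsq y := by rw [hb, nsq_smul]
  have eab : ip a b = t * ip x y := by
    rw [ha, hb, ip_smul_left, ip_smul_right, ht]; ring
  have eAa : A.mulVec a = euclNorm y • A.mulVec x := by rw [ha, Matrix.mulVec_smul]
  have eAb : A.mulVec b = euclNorm x • A.mulVec y := by rw [hb, Matrix.mulVec_smul]
  have eAab : ip (A.mulVec a) (A.mulVec b) = t * ip (A.mulVec x) (A.mulVec y) := by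
    rw [eAa, eAb, ip_smul_left, ip_smul_right, ht]; ring
  have hts : nsq a = t ^ 2 ∧ nsq b = t ^ 2 := by
    constructor
    · rw [ea, ht, ← euclNorm_sq]; ring
    · rw [eb, ht, ← euclNorm_sq]; ring
  rcases hts with ⟨ea', eb'⟩
  rw [eAab, eab, ea', eb'] at h1 h2
  -- now h1 : t^2 + 2*(t*ipA) + t^2 ≤ (1+δ)*(t^2 + 2*(t*ip) + t^2) etc.
  have key : 4 * t * ip (A.mulVec x) (A.mulVec y) ≤ 4 * t * ip x y + 4 * δ * t ^ 2 := by
    nlinarith [h1, h2]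
  have htnn : 0 ≤ t := mul_nonneg (euclNorm_nonneg x) (euclNorm_nonneg y)
  rcases eq_or_lt_of_le htnn with hteq | htpos
  · -- t = 0 : x = 0 or y = 0
    have : euclNorm x = 0 ∨ euclNorm y = 0 := by
      rcases mul_eq_zero.1 hteq.symm with h | h
      · exact Or.inl h
      · exact Or.inr h
    rcases this with h | h
    · have hx0 : x = 0 := (euclNorm_eq_zero_iff x).1 h
      subst hx0
      rw [Matrix.mulVec_zero, ip_zero_left, ip_zero_left, ← hteq]
      simp
    · have hy0 : y = 0 := (euclNorm_eq_zero_iff y).1 h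
      subst hy0
      rw [Matrix.mulVec_zero, ip_zero_right, ip_zero_right, ← hteq]
      simp
  · have h4t : (0:ℝ) < 4 * t := by linarith
    have := (mul_le_mul_iff_right₀ h4t).1 (by
      calc 4 * t * ip (A.mulVec x) (A.mulVec y) ≤ 4 * t * ip x y + 4 * δ * t ^ 2 := key
        _ = 4 * t * (ip x y + δ * t) := by ring)
    linarith [this]

lemma polar_lb {L : ℕ} {δ : ℝ} {A : Matrix (Fin m) (Fin d) ℝ} (hR : RIP A L δ)
    {x y : Fin d → ℝ} (hcard : (supp x ∪ supp y).card ≤ L) :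
    ip x y - δ * (euclNorm x * euclNorm y) ≤ ip (A.mulVec x) (A.mulVec y) := by
  have hcard' : (supp x ∪ supp (-y)).card ≤ L := by rwa [supp_neg]
  have h := polar_ub hR hcard'
  rw [Matrix.mulVec_neg, ip_neg_right, ip_neg_right, euclNorm_neg] at h
  linarith

end CoSaMPAux

namespace CoSaMPAux

variable {d m : ℕ}

/-- from `‖z‖² ≤ δ ‖r‖ ‖z‖` conclude `‖z‖² ≤ δ² ‖r‖²` (squared form). -/
lemma sq_cancel {δ nr : ℝ} (hδ : 0 ≤ δ) (hnr : 0 ≤ nr) (z : Fin d → ℝ)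
    (h : nsq z ≤ δ * (nr * euclNorm z)) : nsq z ≤ δ ^ 2 * nr ^ 2 := by
  rcases eq_or_lt_of_le (euclNorm_nonneg z) with h0 | h0
  · have : nsq z = 0 := by rw [← euclNorm_sq, ← h0]; ring
    rw [this]; positivity
  · have h3 : euclNorm z ≤ δ * nr := by
      nlinarith [euclNorm_sq z]
    nlinarith [euclNorm_sq z, euclNorm_nonneg z]

/-- restricted error bound: `‖((AᵀA - I) r)|_W‖² ≤ δ² ‖r‖²` when `|W ∪ supp r| ≤ L`. -/
lemma err_restrict {L : ℕ} {δ : ℝ} {A : Matrix (Fin m) (Fin d) ℝ} (hR : RIP A L δ)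
    (r : Fin d → ℝ) (W : Finset (Fin d)) (hc : (W ∪ supp r).card ≤ L) :
    ssq W (fun i => A.transpose.mulVec (A.mulVec r) i - r i) ≤ δ ^ 2 * nsq r := by
  set eV : Fin d → ℝ := fun i => A.transpose.mulVec (A.mulVec r) i - r i with heV
  set z : Fin d → ℝ := restrict eV W with hz
  have hzW : supp z ⊆ W := supp_restrict_subset eV W
  have hnsqz : nsq z = ssq W eV := nsq_restrict W eV
  have hipz : ip eV z = nsq z := by
    unfold ip nsq
    apply Finset.sum_congr rfl
    intro i _
    by_cases hiW : i ∈ W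
    · simp [hz, _root_.restrict, hiW]; ring
    · simp [hz, _root_.restrict, hiW]
  have hsplit : ip eV z = ip (A.mulVec r) (A.mulVec z) - ip r z := by
    have : eV = (fun i => A.transpose.mulVec (A.mulVec r) i) - r := by
      funext i; simp [heV]
    rw [this, ip_sub_left, mulVec_ip_transpose]
  have hcard' : (supp r ∪ supp z).card ≤ L := by
    refine le_trans (Finset.card_le_card ?_) hc
    intro i hi
    rcases Finset.mem_union.1 hi with h | h
    · exact Finset.mem_union.2 (Or.inr h)
    · exact Finset.mem_union.2 (Or.inl (hzW h))
  have hub := polar_ub hR (x := r) (y := z) hcard'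
  have h1 : nsq z ≤ δ * (euclNorm r * euclNorm z) := by
    rw [← hipz, hsplit]; linarith
  have h4 := sq_cancel (le_of_lt hR.1) (euclNorm_nonneg r) z h1
  rw [euclNorm_sq] at h4
  rw [← hnsqz]
  linarith [h4]

/-- least squares estimate: on-support part is δ-dominated (squared form). -/
lemma ls_bound {L : ℕ} {δ : ℝ} {A : Matrix (Fin m) (Fin d) ℝ} (hR : RIP A L δ)
    {x u : Fin d → ℝ} {U : Finset (Fin d)}
    (hls : ∀ z : Fin d → ℝ, supp z ⊆ U →
      ∑ i, (A.mulVec x i - A.mulVec u i) * A.mulVec z i = 0)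
    (hcard : (supp (x - u) ∪ U).card ≤ L) :
    ssq U (fun i => x i - u i) ≤ δ ^ 2 * nsq (x - u) := by
  set w : Fin d → ℝ := x - u with hw
  set z : Fin d → ℝ := restrict w U with hzdef
  have hzU : supp z ⊆ U := supp_restrict_subset w U
  have horth : ip (A.mulVec w) (A.mulVec z) = 0 := by
    have h0 := hls z hzU
    have hAw : A.mulVec w = A.mulVec x - A.mulVec u := by
      rw [hw, Matrix.mulVec_sub]
    unfold ip
    rw [hAw]
    simpa [Pi.sub_apply] using h0
  have hipz : ip w z = nsq z := by
    unfold ip nsq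
    apply Finset.sum_congr rfl
    intro i _
    by_cases hiU : i ∈ U
    · simp [hzdef, _root_.restrict, hiU]; ring
    · simp [hzdef, _root_.restrict, hiU]
  have hcard' : (supp w ∪ supp z).card ≤ L := by
    refine le_trans (Finset.card_le_card ?_) hcard
    exact Finset.union_subset_union (subset_refl _) hzU
  have hlb := polar_lb hR (x := w) (y := z) hcard'
  rw [horth] at hlb
  have h1 : nsq z ≤ δ * (euclNorm w * euclNorm z) := by
    rw [← hipz]; linarith
  have h4 := sq_cancel (le_of_lt hR.1) (euclNorm_nonneg w) z h1
  rw [euclNorm_sq] at h4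
  have heq : ssq U (fun i => x i - u i) = nsq z := by
    rw [hzdef, nsq_restrict]
    unfold ssq
    apply Finset.sum_congr rfl
    intro i _
    simp [hw, Pi.sub_apply]
  rw [heq, hw] at *
  linarith [h4]

end CoSaMPAux

namespace CoSaMPAux

variable {d m : ℕ}

lemma abs_sq_le {a b : ℝ} (h : |a| ≤ |b|) : a ^ 2 ≤ b ^ 2 := by
  nlinarith [abs_nonneg a, abs_nonneg b, sq_abs a, sq_abs b]

lemma inter_compl_eq_sdiff (S U : Finset (Fin d)) : S ∩ Uᶜ = S \ U := by
  ext i; simp [Finset.mem_sdiff, Finset.mem_inter, Finset.mem_compl]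

lemma key_step {K : ℕ} {A : Matrix (Fin m) (Fin d) ℝ} {δ4 : ℝ}
    (hRIP4 : RIP A (4 * K) δ4) {x xprev xnext : Fin d → ℝ}
    (hx : (supp x).card ≤ K) (hprev : (supp xprev).card ≤ K)
    (hstep : CoSaMPStep K A (A.mulVec x) xprev xnext) :
    ∃ T : Finset (Fin d), T ⊆ supp x ∧
      nsq (x - xnext) ≤ (1 + 2 * δ4 ^ 2) / (1 - δ4 ^ 2) * ssq T x ∧
      ssq T x ≤ 2 * δ4 ^ 2 * nsq (x - xprev) := by
  obtain ⟨h, S', u, hhcard, hgmax, hLS, hS'sub, hS'card, humax, hxnext⟩ := hstep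
  obtain ⟨husupp, hls⟩ := hLS
  set S : Finset (Fin d) := supp x with hSdef
  set U : Finset (Fin d) := supp xprev ∪ h with hUdef
  set T : Finset (Fin d) := S \ U with hTdef
  have hδpos : 0 < δ4 := hRIP4.1
  have hδlt : δ4 < 1 := hRIP4.2.1
  have hδsq : δ4 ^ 2 < 1 := by nlinarith
  refine ⟨T, Finset.sdiff_subset, ?_, ?_⟩
  · -- estimation + pruning
    set w : Fin d → ℝ := x - u with hwdef
    have hUcard : U.card ≤ 3 * K := by
      calc U.card ≤ (supp xprev).card + h.card := Finset.card_union_le _ _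
        _ ≤ K + 2 * K := by omega
        _ = 3 * K := by ring
    have hwsupp : supp w ∪ U ⊆ S ∪ U := by
      apply Finset.union_subset _ Finset.subset_union_right
      refine (supp_sub_subset x u).trans ?_
      apply Finset.union_subset
      · exact Finset.subset_union_left
      · exact husupp.trans Finset.subset_union_right
    have hcardw : (supp w ∪ U).card ≤ 4 * K := by
      calc (supp w ∪ U).card ≤ (S ∪ U).card := Finset.card_le_card hwsupp
        _ ≤ S.card + U.card := Finset.card_union_le _ _
        _ ≤ K + 3 * K := by omega
        _ = 4 * K := by ring
    have hlsq : ssq U (fun i => x i - u i) ≤ δ4 ^ 2 * nsq w :=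
      ls_bound hRIP4 hls hcardw
    have hUw : ssq U w ≤ δ4 ^ 2 * nsq w := by
      have : ssq U w = ssq U (fun i => x i - u i) := by
        unfold ssq; apply Finset.sum_congr rfl; intro i _; simp [hwdef]
      rw [this]; exact hlsq
    -- split nsq w
    have hsplitw : nsq w = ssq U w + ssq Uᶜ w := nsq_eq_ssq_add_compl U w
    have hwoffU : ssq Uᶜ w = ssq T x := by
      have e1 : ssq Uᶜ w = ssq Uᶜ x := by
        unfold ssq; apply Finset.sum_congr rfl; intro i hi
        have hiU : i ∉ U := by simpa using hi
        have hu0 : u i = 0 := not_mem_supp (fun hc => hiU (husupp hc))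
        simp [hwdef, hu0]
      have e2 : ssq Uᶜ x = ssq (S ∩ Uᶜ) x :=
        ssq_of_zero_off (fun i hi => not_mem_supp hi)
      rw [e1, e2, inter_compl_eq_sdiff, hTdef]
    have hB2 : (1 - δ4 ^ 2) * nsq w ≤ ssq T x := by
      have := hsplitw
      rw [hwoffU] at this
      nlinarith [hUw, this]
    -- pruning decomposition
    have hprune : nsq (x - xnext) = ssq S' w + ssq S'ᶜ x := by
      rw [nsq_eq_ssq_add_compl S']
      congr 1
      · unfold ssq; apply Finset.sum_congr rfl; intro i hi
        simp [hxnext, _root_.restrict, hi, hwdef]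
      · unfold ssq; apply Finset.sum_congr rfl; intro i hi
        have : i ∉ S' := by simpa using hi
        simp [hxnext, _root_.restrict, this]
    have hoffS' : ssq S'ᶜ x = ssq (S \ S') x := by
      rw [ssq_of_zero_off (fun i hi => not_mem_supp hi), inter_compl_eq_sdiff]
    set c : Finset (Fin d) := (S ∩ U) \ S' with hcdef
    have hsplit2 : ssq (S \ S') x ≤ ssq T x + ssq c x := by
      have hsub : S \ S' ⊆ T ∪ c := by
        intro i hi
        rw [Finset.mem_sdiff] at hi
        by_cases hiU : i ∈ U
        · exact Finset.mem_union.2 (Or.inr (by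
            rw [hcdef, Finset.mem_sdiff, Finset.mem_inter]
            exact ⟨⟨hi.1, hiU⟩, hi.2⟩))
        · exact Finset.mem_union.2 (Or.inl (by
            rw [hTdef, Finset.mem_sdiff]; exact ⟨hi.1, hiU⟩))
      calc ssq (S \ S') x ≤ ssq (T ∪ c) x := ssq_le_ssq_of_subset hsub x
        _ ≤ ssq T x + ssq c x := by
            have hd : Disjoint T c := by
              rw [Finset.disjoint_right]
              intro i hic
              rw [hcdef, Finset.mem_sdiff, Finset.mem_inter] at hic
              rw [hTdef, Finset.mem_sdiff]
              intro hT
              exact hT.2 hic.1.2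
            unfold ssq
            rw [Finset.sum_union hd]
    have hcx : ssq c x ≤ 2 * ssq c w + 2 * ssq c (fun i => u i) := by
      unfold ssq
      rw [Finset.mul_sum, Finset.mul_sum, ← Finset.sum_add_distrib]
      apply Finset.sum_le_sum
      intro i _
      have : x i = w i + u i := by simp [hwdef]
      rw [this]; nlinarith [sq_nonneg (w i - u i)]
    have hcu : ssq c (fun i => u i) ≤ ssq (S' \ S) (fun i => u i) := by
      unfold ssq
      apply sum_le_sum_of_card_le _ (fun j _ => sq_nonneg _)
      · -- card c ≤ card (S' \ S)
        have e1 : c.card + (S ∩ U ∩ S').card = (S ∩ U).card := by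
          rw [hcdef]; exact Finset.card_sdiff_add_card_inter _ _
        have e2 : (S' \ S).card + (S' ∩ S).card = S'.card := by
          exact Finset.card_sdiff_add_card_inter _ _
        have e3 : S ∩ U ∩ S' = S' ∩ S := by
          ext i
          simp only [Finset.mem_inter]
          constructor
          · rintro ⟨⟨h1, _⟩, h3⟩; exact ⟨h3, h1⟩
          · rintro ⟨h1, h2⟩; exact ⟨⟨h2, hS'sub h1⟩, h1⟩
        have e4 : (S ∩ U).card ≤ K := le_trans (Finset.card_le_card Finset.inter_subset_left) hx
        have e3' : (S ∩ U ∩ S').card = (S' ∩ S).card := by rw [e3]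
        omega
      · intro i hi j hj
        have hiS' : i ∉ S' := by
          rw [hcdef, Finset.mem_sdiff] at hi; exact hi.2
        have hjS' : j ∈ S' := (Finset.mem_sdiff.1 hj).1
        exact abs_sq_le (humax j hjS' i hiS')
    have hwu : ssq (S' \ S) (fun i => u i) = ssq (S' \ S) w := by
      unfold ssq; apply Finset.sum_congr rfl; intro i hi
      have : x i = 0 := not_mem_supp (by
        intro hc; exact (Finset.mem_sdiff.1 hi).2 hc)
      simp [hwdef, this]
    -- the 3 ‖w_U‖² bound
    have hb1 : ssq S' w + ssq c w ≤ ssq U w := by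
      have hdisj : Disjoint S' c := by
        rw [Finset.disjoint_right]
        intro i hic
        rw [hcdef, Finset.mem_sdiff] at hic
        exact hic.2
      have : ssq S' w + ssq c w = ssq (S' ∪ c) w := by
        unfold ssq; rw [Finset.sum_union hdisj]
      rw [this]
      apply ssq_le_ssq_of_subset
      apply Finset.union_subset hS'sub
      rw [hcdef]
      exact Finset.sdiff_subset.trans Finset.inter_subset_right
    have hb2 : ssq (S' \ S) w + ssq c w ≤ ssq U w := by
      have hdisj : Disjoint (S' \ S) c := by
        rw [Finset.disjoint_right]
        intro i hic
        rw [hcdef, Finset.mem_sdiff] at hic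
        intro hmem
        exact hic.2 (Finset.mem_sdiff.1 hmem).1
      have : ssq (S' \ S) w + ssq c w = ssq (S' \ S ∪ c) w := by
        unfold ssq; rw [Finset.sum_union hdisj]
      rw [this]
      apply ssq_le_ssq_of_subset
      apply Finset.union_subset (Finset.sdiff_subset.trans hS'sub)
      rw [hcdef]
      exact Finset.sdiff_subset.trans Finset.inter_subset_right
    -- combine everything
    have hmain : nsq (x - xnext) ≤ ssq T x + 3 * ssq U w := by
      have h0 : nsq (x - xnext) ≤ ssq S' w + ssq T x + ssq c x := by
        rw [hprune, hoffS']
        linarith [hsplit2]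
      have h1 : ssq c x ≤ 2 * ssq c w + 2 * ssq (S' \ S) w := by
        calc ssq c x ≤ 2 * ssq c w + 2 * ssq c (fun i => u i) := hcx
          _ ≤ 2 * ssq c w + 2 * ssq (S' \ S) w := by
              rw [← hwu]; linarith [hcu]
      linarith [hb1, hb2, ssq_nonneg c w, h0, h1]
    -- final algebra
    rw [div_mul_eq_mul_div, le_div_iff₀ (by nlinarith : (0:ℝ) < 1 - δ4 ^ 2)]
    nlinarith [hmain, hUw, hB2, nsq_nonneg w, ssq_nonneg T x, sq_nonneg δ4]
  · -- identification
    set r : Fin d → ℝ := x - xprev with hrdef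
    set B : Finset (Fin d) := S ∪ supp xprev with hBdef
    have hrB : supp r ⊆ B := supp_sub_subset x xprev
    have hBcard : B.card ≤ 2 * K := by
      calc B.card ≤ S.card + (supp xprev).card := Finset.card_union_le _ _
        _ ≤ K + K := by omega
        _ = 2 * K := by ring
    set g : Fin d → ℝ := A.transpose.mulVec (A.mulVec x - A.mulVec xprev) with hgdef
    have hgr : g = A.transpose.mulVec (A.mulVec r) := by
      rw [hgdef, hrdef, Matrix.mulVec_sub A x xprev]
    set eV : Fin d → ℝ := fun i => g i - r i with heVdef
    have hTB : T ⊆ B \ h := by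
      intro i hi
      rw [hTdef, Finset.mem_sdiff] at hi
      rw [Finset.mem_sdiff, hBdef]
      constructor
      · exact Finset.mem_union.2 (Or.inl hi.1)
      · intro hih
        exact hi.2 (Finset.mem_union.2 (Or.inr hih))
    have hcards : (B \ h).card ≤ (h \ B).card := by
      have e1 : (B \ h).card + (B ∩ h).card = B.card := Finset.card_sdiff_add_card_inter _ _
      have e2 : (h \ B).card + (h ∩ B).card = h.card := Finset.card_sdiff_add_card_inter _ _
      have e3 : (B ∩ h).card = (h ∩ B).card := by rw [Finset.inter_comm]
      omega
    have hTcard : T.card ≤ (h \ B).card :=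
      le_trans (Finset.card_le_card hTB) hcards
    have hcomp : ∑ i ∈ T, g i ^ 2 ≤ ∑ j ∈ h \ B, g j ^ 2 := by
      apply sum_le_sum_of_card_le _ (fun j _ => sq_nonneg _) hTcard
      intro i hi j hj
      have hih : i ∉ h := by
        have := hTB hi
        rw [Finset.mem_sdiff] at this
        exact this.2
      have hjh : j ∈ h := (Finset.mem_sdiff.1 hj).1
      exact abs_sq_le (hgmax j hjh i hih)
    have hgeV : ∑ j ∈ h \ B, g j ^ 2 = ∑ j ∈ h \ B, eV j ^ 2 := by
      apply Finset.sum_congr rfl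
      intro j hj
      have hjB : j ∉ B := (Finset.mem_sdiff.1 hj).2
      have hr0 : r j = 0 := not_mem_supp (fun hc => hjB (hrB hc))
      simp [heVdef, hr0]
    have hTr : ssq T x = ∑ i ∈ T, r i ^ 2 := by
      unfold ssq
      apply Finset.sum_congr rfl
      intro i hi
      have hiU : i ∉ U := (Finset.mem_sdiff.1 hi).2
      have hprev0 : xprev i = 0 := not_mem_supp (fun hc =>
        hiU (Finset.mem_union.2 (Or.inl hc)))
      simp [hrdef, hprev0]
    have hpt : ∀ i, r i ^ 2 ≤ 2 * g i ^ 2 + 2 * eV i ^ 2 := by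
      intro i
      have : r i = g i - eV i := by simp [heVdef]
      rw [this]; nlinarith [sq_nonneg (g i + eV i)]
    have hdisjThB : Disjoint T (h \ B) := by
      rw [Finset.disjoint_right]
      intro j hj
      have := (Finset.mem_sdiff.1 hj).2
      intro hjT
      exact this ((Finset.mem_sdiff.1 (hTB hjT)).1)
    have herr : ∑ i ∈ T ∪ (h \ B), eV i ^ 2 ≤ δ4 ^ 2 * nsq r := by
      have hW : ((T ∪ (h \ B)) ∪ supp r).card ≤ 4 * K := by
        have hsub : (T ∪ (h \ B)) ∪ supp r ⊆ B ∪ h := by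
          apply Finset.union_subset
          · apply Finset.union_subset
            · exact hTB.trans (Finset.sdiff_subset.trans Finset.subset_union_left)
            · exact Finset.sdiff_subset.trans Finset.subset_union_right
          · exact hrB.trans Finset.subset_union_left
        calc ((T ∪ (h \ B)) ∪ supp r).card ≤ (B ∪ h).card := Finset.card_le_card hsub
          _ ≤ B.card + h.card := Finset.card_union_le _ _
          _ ≤ 2 * K + 2 * K := by omega
          _ = 4 * K := by ring
      have := err_restrict hRIP4 r (T ∪ (h \ B)) hW
      have heq : ssq (T ∪ (h \ B)) (fun i => A.transpose.mulVec (A.mulVec r) i - r i)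
          = ∑ i ∈ T ∪ (h \ B), eV i ^ 2 := by
        unfold ssq
        apply Finset.sum_congr rfl
        intro i _
        simp [heVdef, hgr]
      rw [heq] at this
      exact this
    have hsum_split : ∑ i ∈ T ∪ (h \ B), eV i ^ 2
        = ∑ i ∈ T, eV i ^ 2 + ∑ i ∈ h \ B, eV i ^ 2 := Finset.sum_union hdisjThB
    have chain : ssq T x ≤ 2 * (∑ i ∈ T, eV i ^ 2 + ∑ i ∈ h \ B, eV i ^ 2) := by
      rw [hTr]
      calc ∑ i ∈ T, r i ^ 2 ≤ ∑ i ∈ T, (2 * g i ^ 2 + 2 * eV i ^ 2) :=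
            Finset.sum_le_sum (fun i _ => hpt i)
        _ = 2 * ∑ i ∈ T, g i ^ 2 + 2 * ∑ i ∈ T, eV i ^ 2 := by
            rw [Finset.sum_add_distrib, Finset.mul_sum, Finset.mul_sum]
        _ ≤ 2 * ∑ j ∈ h \ B, g j ^ 2 + 2 * ∑ i ∈ T, eV i ^ 2 := by linarith [hcomp]
        _ = 2 * ∑ j ∈ h \ B, eV j ^ 2 + 2 * ∑ i ∈ T, eV i ^ 2 := by rw [hgeV]
        _ = 2 * (∑ i ∈ T, eV i ^ 2 + ∑ i ∈ h \ B, eV i ^ 2) := by ring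
    calc ssq T x ≤ 2 * (∑ i ∈ T, eV i ^ 2 + ∑ i ∈ h \ B, eV i ^ 2) := chain
      _ = 2 * ∑ i ∈ T ∪ (h \ B), eV i ^ 2 := by rw [hsum_split]
      _ ≤ 2 * (δ4 ^ 2 * nsq r) := by linarith [herr]
      _ = 2 * δ4 ^ 2 * nsq (x - xprev) := by rw [hrdef]; ring

end CoSaMPAux

namespace CoSaMPAux

noncomputable def lnp (t : ℝ) : ℝ := max (Real.log t) 0

lemma lnp_nonneg (t : ℝ) : 0 ≤ lnp t := le_max_right _ _

lemma lnp_zero : lnp 0 = 0 := by simp [lnp, Real.log_zero]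

lemma lnp_of_one_le {t : ℝ} (h : 1 ≤ t) : lnp t = Real.log t :=
  max_eq_left (Real.log_nonneg h)

lemma lnp_of_le_one {t : ℝ} (h0 : 0 ≤ t) (h : t ≤ 1) : lnp t = 0 := by
  rcases eq_or_lt_of_le h0 with h1 | h1
  · rw [← h1]; exact lnp_zero
  · exact max_eq_right (Real.log_nonpos (le_of_lt h1) h)

lemma lnp_le_log {t s : ℝ} (ht : 0 ≤ t) (hs : 1 ≤ s) (hts : t ≤ s) :
    lnp t ≤ Real.log s := by
  apply max_le _ (Real.log_nonneg hs)
  rcases eq_or_lt_of_le ht with h1 | h1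
  · rw [← h1, Real.log_zero]; exact Real.log_nonneg hs
  · exact Real.log_le_log h1 hts

lemma nat_succ_le_two_pow (q : ℕ) : (q : ℝ) + 1 ≤ 2 ^ q := by
  have := Nat.lt_two_pow_self (n := q)
  have h2 : (q : ℝ) + 1 ≤ ((2 ^ q : ℕ) : ℝ) := by exact_mod_cast this
  calc (q:ℝ) + 1 ≤ ((2 ^ q : ℕ) : ℝ) := h2
    _ = 2 ^ q := by push_cast; ring

lemma log_succ_le_mul_log2 (q : ℕ) : Real.log ((q:ℝ) + 1) ≤ q * Real.log 2 := by
  have h1 : Real.log ((q:ℝ) + 1) ≤ Real.log ((2:ℝ) ^ q) :=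
    Real.log_le_log (by positivity) (nat_succ_le_two_pow q)
  have h2 : Real.log ((2:ℝ) ^ q) = q * Real.log 2 := by
    rw [Real.log_pow]
  linarith

set_option maxHeartbeats 1600000 in
/-- main amortized inequality for the iteration count -/
lemma main_ineq {R : ℝ} (hR0 : 0 < R) (hR1 : R < 1) (q κ : ℕ) (hq : 1 ≤ q)
    (Z' : ℝ) (hZ' : 0 ≤ Z')
    (hcon : κ = 0 ∨ 1 ≤ R ^ κ * ((q : ℝ) + R * Z')) :
    ((κ : ℝ) + 1) * Real.log (1 / R) + lnp ((q : ℝ) + R ^ (κ + 1) * Z') - lnp Z'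
      ≤ (q : ℝ) * (Real.log 4 + Real.log (1 / R)) := by
  set ℓ : ℝ := Real.log (1 / R) with hℓdef
  have hℓpos : 0 < ℓ := Real.log_pos (by rw [lt_div_iff₀ hR0]; linarith)
  have hq1 : (1:ℝ) ≤ (q:ℝ) := by exact_mod_cast hq
  have hlog4 : Real.log 4 = 2 * Real.log 2 := by
    rw [show (4:ℝ) = 2 ^ 2 by norm_num, Real.log_pow]; push_cast; ring
  have hlogq : Real.log ((q:ℝ) + 1) ≤ q * Real.log 2 := log_succ_le_mul_log2 q
  have hRκ : (0:ℝ) < R ^ κ := pow_pos hR0 κ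
  have hcore : (κ : ℝ) * ℓ + lnp ((q : ℝ) + R ^ (κ + 1) * Z') - lnp Z'
      ≤ 2 * Real.log ((q:ℝ) + 1) := by
    have hlogq1 : 0 ≤ Real.log ((q:ℝ)+1) := Real.log_nonneg (by linarith)
    rcases hcon with hκ0 | hcon
    · subst hκ0
      simp only [Nat.cast_zero, zero_mul, zero_add, pow_one]
      have h1 : lnp ((q : ℝ) + R * Z') - lnp Z' ≤ Real.log ((q:ℝ) + 1) := by
        rcases le_or_gt 1 Z' with hZ1 | hZ1
        · rw [lnp_of_one_le (by nlinarith : (1:ℝ) ≤ (q : ℝ) + R * Z'),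
            lnp_of_one_le hZ1]
          rw [← Real.log_div (by nlinarith) (by linarith)]
          apply Real.log_le_log (by positivity)
          rw [div_le_iff₀ (by linarith)]
          nlinarith [mul_nonneg (by linarith : (0:ℝ) ≤ (q:ℝ)) (by linarith : (0:ℝ) ≤ Z' - 1),
            mul_nonneg (by linarith : (0:ℝ) ≤ Z') (by linarith : (0:ℝ) ≤ 1 - R)]
        · have hle : (q : ℝ) + R * Z' ≤ (q:ℝ) + 1 := by nlinarith
          have h2 := lnp_le_log (by positivity) (by linarith : (1:ℝ) ≤ (q:ℝ) + 1) hle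
          have h3 := lnp_nonneg Z'
          linarith
      linarith
    · set Y : ℝ := (q : ℝ) + R * Z' with hY
      have hY1 : (1:ℝ) ≤ Y := by
        have : (0:ℝ) ≤ R * Z' := by positivity
        simp only [hY]; linarith
      have hRκY : (1/R) ^ κ ≤ Y := by
        have e : (1/R) ^ κ = 1 / R ^ κ := by rw [div_pow, one_pow]
        rw [e, div_le_iff₀ hRκ]
        nlinarith
      have hκℓ : (κ : ℝ) * ℓ = Real.log ((1/R) ^ κ) := by
        rw [Real.log_pow]
      have hRinvκ : (0:ℝ) < (1/R) ^ κ := by positivity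
      have e0 : (1/R) ^ κ * R ^ (κ+1) = R := by
        rw [div_pow, one_pow, pow_succ]
        field_simp
      have e1 : (1/R) ^ κ * ((q:ℝ) + R ^ (κ+1) * Z')
          = (1/R) ^ κ * (q:ℝ) + R * Z' := by
        rw [mul_add, ← mul_assoc, e0]
      have e2 : (1/R) ^ κ * (q:ℝ) ≤ Y * (q:ℝ) :=
        mul_le_mul_of_nonneg_right hRκY (by linarith)
      rcases le_or_gt 1 Z' with hZ1 | hZ1
      · have hZpos : (0:ℝ) < Z' := by linarith
        have hZge : (1:ℝ) ≤ (q : ℝ) + R ^ (κ+1) * Z' := by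
          have : (0:ℝ) ≤ R ^ (κ+1) * Z' := by positivity
          linarith
        rw [lnp_of_one_le hZge, lnp_of_one_le hZ1, hκℓ]
        have hbound : (1/R) ^ κ * ((q:ℝ) + R ^ (κ+1) * Z') / Z' ≤ ((q:ℝ)+1) ^ 2 := by
          rw [div_le_iff₀ hZpos, e1]
          have c1 : (1/R) ^ κ * (q:ℝ) ≤ (q:ℝ)^2 + R * Z' * (q:ℝ) := by
            calc (1/R) ^ κ * (q:ℝ) ≤ Y * (q:ℝ) := e2
              _ = (q:ℝ)^2 + R * Z' * (q:ℝ) := by rw [hY]; ring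
          have hA : R * Z' * ((q:ℝ)+1) ≤ Z' * ((q:ℝ)+1) := by
            have h1 := mul_nonneg (mul_nonneg (by linarith : (0:ℝ) ≤ 1 - R)
              (by linarith : (0:ℝ) ≤ Z')) (by linarith : (0:ℝ) ≤ (q:ℝ)+1)
            nlinarith [h1]
          have hB : (q:ℝ)^2 ≤ ((q:ℝ)+1) * (q:ℝ) * Z' := by
            have h1 := mul_nonneg (mul_nonneg (by linarith : (0:ℝ) ≤ Z' - 1)
              (by linarith : (0:ℝ) ≤ (q:ℝ))) (by linarith : (0:ℝ) ≤ (q:ℝ)+1)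
            nlinarith [h1]
          nlinarith [c1, hA, hB]
        have hcomb : Real.log ((1/R) ^ κ) + Real.log ((q:ℝ) + R ^ (κ+1) * Z') - Real.log Z'
            = Real.log ((1/R) ^ κ * ((q:ℝ) + R ^ (κ+1) * Z') / Z') := by
          rw [Real.log_div (by positivity) (by linarith),
            Real.log_mul (by positivity) (by linarith)]
        have hfin : Real.log ((1/R) ^ κ * ((q:ℝ) + R ^ (κ+1) * Z') / Z')
            ≤ 2 * Real.log ((q:ℝ)+1) := by
          have := Real.log_le_log (by positivity) hbound
          have hsq : Real.log (((q:ℝ)+1) ^ 2) = 2 * Real.log ((q:ℝ)+1) := by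
            rw [Real.log_pow]; push_cast; ring
          linarith
        linarith [hcomb, hfin]
      · have hZq : (1:ℝ) ≤ (q:ℝ) + R ^ (κ+1) * Z' := by
          have : (0:ℝ) ≤ R ^ (κ+1) * Z' := by positivity
          linarith
        rw [lnp_of_one_le hZq, lnp_of_le_one hZ' (le_of_lt hZ1), hκℓ]
        have hRZ : R * Z' ≤ 1 := by nlinarith
        have hbound : (1/R) ^ κ * ((q:ℝ) + R ^ (κ+1) * Z') ≤ ((q:ℝ)+1) ^ 2 := by
          rw [e1]
          have c1 : (1/R) ^ κ * (q:ℝ) ≤ (q:ℝ)^2 + R * Z' * (q:ℝ) := by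
            calc (1/R) ^ κ * (q:ℝ) ≤ Y * (q:ℝ) := e2
              _ = (q:ℝ)^2 + R * Z' * (q:ℝ) := by rw [hY]; ring
          have hA : R * Z' * (q:ℝ) ≤ (q:ℝ) := by
            have h1 := mul_nonneg (by linarith [hRZ] : (0:ℝ) ≤ 1 - R * Z')
              (by linarith : (0:ℝ) ≤ (q:ℝ))
            nlinarith [h1]
          nlinarith [c1, hA, hRZ]
        have hcomb : Real.log ((1/R) ^ κ) + Real.log ((q:ℝ) + R ^ (κ+1) * Z')
            = Real.log ((1/R) ^ κ * ((q:ℝ) + R ^ (κ+1) * Z')) := by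
          rw [Real.log_mul (by positivity) (by linarith)]
        have hfin : Real.log ((1/R) ^ κ * ((q:ℝ) + R ^ (κ+1) * Z'))
            ≤ 2 * Real.log ((q:ℝ)+1) := by
          have := Real.log_le_log (by positivity) hbound
          have hsq : Real.log (((q:ℝ)+1) ^ 2) = 2 * Real.log ((q:ℝ)+1) := by
            rw [Real.log_pow]; push_cast; ring
          linarith
        linarith [hcomb, hfin]
  have h4q : 2 * Real.log ((q:ℝ)+1) ≤ (q:ℝ) * Real.log 4 := by
    rw [hlog4]; linarith
  nlinarith [hcore, hℓpos, hq1]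

end CoSaMPAux

namespace CoSaMPAux

set_option maxHeartbeats 1600000 in
lemma seq_lemma {d : ℕ} (S : Finset (Fin d)) (w2 : Fin d → ℝ)
    (hpos : ∀ i ∈ S, 0 < w2 i)
    (F : ℕ → ℝ) (hFnn : ∀ n, 0 ≤ F n)
    (D2 M2 R : ℝ) (hD2 : 0 < D2) (hM2 : 1 ≤ M2) (hRdef : R = D2 * M2)
    (hR0 : 0 < R) (hR1 : R < 1) :
    ∀ p : ℕ, ∀ P : Finset (Fin d), P.card = p → P ⊆ S → ∀ n₀ : ℕ, ∀ Θ : ℝ,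
      (∀ n, n₀ ≤ n → ∃ T, T ⊆ P ∧ F (n+1) ≤ M2 * ∑ i ∈ T, w2 i ∧
        ∑ i ∈ T, w2 i ≤ D2 * F n) →
      F n₀ ≤ M2 * ∑ i ∈ P, w2 i →
      (∀ i ∈ P, w2 i ≤ Θ) →
      D2 * F n₀ ≤ R * Θ →
      ∃ Z : ℝ, 0 ≤ Z ∧ (∑ i ∈ P, w2 i ≤ Θ * Z) ∧
        ∀ N : ℕ, (n₀ : ℝ) + ((Real.log (4/R) / Real.log (1/R)) * p
            - lnp Z / Real.log (1/R)) ≤ N → F N = 0 := by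
  classical
  have hℓpos : 0 < Real.log (1/R) := Real.log_pos (by rw [lt_div_iff₀ hR0]; linarith)
  set ℓ : ℝ := Real.log (1/R) with hℓdef
  set c : ℝ := Real.log (4/R) / ℓ with hcdef
  have hcℓ : c * ℓ = Real.log 4 + ℓ := by
    rw [hcdef, div_mul_cancel₀ _ (ne_of_gt hℓpos), hℓdef,
      Real.log_div (by norm_num) (ne_of_gt hR0), Real.log_div (by norm_num) (ne_of_gt hR0),
      Real.log_one]
    ring
  have hcpos : 0 < c := by
    have h4R : 0 < Real.log (4/R) := Real.log_pos (by
      rw [lt_div_iff₀ hR0]; linarith)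
    exact div_pos h4R hℓpos
  intro p
  induction p using Nat.strong_induction_on with
  | _ p IH =>
    intro P hPcard hPS n₀ Θ hDyn hB hΘ hanch
    -- general consequences of the dynamics
    have hw2nn : ∀ i ∈ P, 0 ≤ w2 i := fun i hi => le_of_lt (hpos i (hPS hi))
    have hcontr : ∀ n, n₀ ≤ n → F (n+1) ≤ R * F n := by
      intro n hn
      obtain ⟨T, hTP, h1, h2⟩ := hDyn n hn
      calc F (n+1) ≤ M2 * ∑ i ∈ T, w2 i := h1
        _ ≤ M2 * (D2 * F n) := by
            apply mul_le_mul_of_nonneg_left h2 (by linarith)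
        _ = R * F n := by rw [hRdef]; ring
    have hchain : ∀ a, n₀ ≤ a → ∀ k : ℕ, F (a + k) ≤ R ^ k * F a := by
      intro a ha k
      induction k with
      | zero => simp
      | succ k ih =>
        have : F (a + k + 1) ≤ R * F (a + k) := hcontr (a + k) (by omega)
        calc F (a + (k+1)) = F (a + k + 1) := by ring_nf
          _ ≤ R * F (a + k) := this
          _ ≤ R * (R ^ k * F a) := by
              apply mul_le_mul_of_nonneg_left ih (by linarith)
          _ = R ^ (k+1) * F a := by ring
    have hmono : ∀ a b, n₀ ≤ a → a ≤ b → F b ≤ F a := by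
      intro a b ha hab
      have hk : b = a + (b - a) := by omega
      rw [hk]
      calc F (a + (b - a)) ≤ R ^ (b - a) * F a := hchain a ha _
        _ ≤ 1 * F a := by
            apply mul_le_mul_of_nonneg_right _ (hFnn a)
            exact pow_le_one₀ (by linarith) (by linarith)
        _ = F a := by ring
    rcases Nat.eq_zero_or_pos p with hp0 | hppos
    · -- base case : P empty
      subst hp0
      have hPempty : P = ∅ := Finset.card_eq_zero.1 hPcard
      subst hPempty
      have hF0 : F n₀ = 0 := by
        have : F n₀ ≤ 0 := by simpa using hB
        linarith [hFnn n₀]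
      refine ⟨0, le_refl 0, by simp, ?_⟩
      intro N hN
      have hn₀N : n₀ ≤ N := by
        have h0 : ((n₀:ℝ)) ≤ N := by
          rw [lnp_zero] at hN
          simp only [Nat.cast_zero, mul_zero, zero_div, sub_zero, add_zero, zero_sub] at hN
          linarith
        exact_mod_cast h0
      have : F N ≤ R ^ (N - n₀) * F n₀ := by
        have := hchain n₀ (le_refl _) (N - n₀)
        rwa [show n₀ + (N - n₀) = N by omega] at this
      rw [hF0, mul_zero] at this
      linarith [hFnn N]
    · -- main case : P nonempty
      have hPne : P.Nonempty := Finset.card_pos.1 (by omega)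
      obtain ⟨j₀, hj₀, hmax⟩ := Finset.exists_max_image P w2 hPne
      have hb2pos : 0 < w2 j₀ := hpos j₀ (hPS hj₀)
      have hex : ∃ i : ℕ, D2 * (R ^ i * F n₀) < w2 j₀ := by
        rcases eq_or_lt_of_le (hFnn n₀) with hF0 | hF0
        · exact ⟨0, by rw [← hF0]; simpa using hb2pos⟩
        · obtain ⟨i, hi⟩ := exists_pow_lt_of_lt_one
            (show (0:ℝ) < w2 j₀ / (D2 * F n₀) by positivity) hR1
          refine ⟨i, ?_⟩
          rw [lt_div_iff₀ (by positivity)] at hi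
          calc D2 * (R ^ i * F n₀) = R ^ i * (D2 * F n₀) := by ring
            _ < w2 j₀ := hi
      set κ : ℕ := Nat.find hex with hκdef
      have hκspec : D2 * (R ^ κ * F n₀) < w2 j₀ := Nat.find_spec hex
      set n₁ : ℕ := n₀ + κ with hn₁def
      have hFn₁ : F n₁ ≤ R ^ κ * F n₀ := hchain n₀ (le_refl _) κ
      have hD2Fn₁ : D2 * F n₁ < w2 j₀ := by
        calc D2 * F n₁ ≤ D2 * (R ^ κ * F n₀) := by
              apply mul_le_mul_of_nonneg_left hFn₁ (le_of_lt hD2)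
          _ < w2 j₀ := hκspec
      set P' : Finset (Fin d) := P.filter (fun j => w2 j ≤ D2 * F n₁) with hP'def
      have hP'P : P' ⊆ P := Finset.filter_subset _ _
      have hj₀P' : j₀ ∉ P' := by
        rw [hP'def, Finset.mem_filter]
        rintro ⟨-, hle⟩
        linarith
      have hP'lt : P'.card < p := by
        rw [← hPcard]
        exact Finset.card_lt_card ((Finset.ssubset_iff_of_subset hP'P).2 ⟨j₀, hj₀, hj₀P'⟩)
      set p' : ℕ := P'.card with hp'def
      set q : ℕ := p - p' with hqdef
      have hq1 : 1 ≤ q := by omega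
      have hpq : p = p' + q := by omega
      -- membership of dynamic sets in P'
      have hTsub : ∀ n, n₁ ≤ n → ∀ T, T ⊆ P → (∑ i ∈ T, w2 i ≤ D2 * F n) → T ⊆ P' := by
        intro n hn T hTP hTle j hj
        rw [hP'def, Finset.mem_filter]
        refine ⟨hTP hj, ?_⟩
        have h1 : w2 j ≤ ∑ i ∈ T, w2 i :=
          Finset.single_le_sum (fun i hi => hw2nn i (hTP hi)) hj
        have h2 : F n ≤ F n₁ := hmono n₁ n (by omega) hn
        have h3 : D2 * F n ≤ D2 * F n₁ := by
          apply mul_le_mul_of_nonneg_left h2 (le_of_lt hD2)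
        linarith
      -- child premises
      have hDyn' : ∀ n, n₁ + 1 ≤ n → ∃ T, T ⊆ P' ∧ F (n+1) ≤ M2 * ∑ i ∈ T, w2 i ∧
          ∑ i ∈ T, w2 i ≤ D2 * F n := by
        intro n hn
        obtain ⟨T, hTP, h1, h2⟩ := hDyn n (by omega)
        exact ⟨T, hTsub n (by omega) T hTP h2, h1, h2⟩
      have hB' : F (n₁ + 1) ≤ M2 * ∑ i ∈ P', w2 i := by
        obtain ⟨T, hTP, h1, h2⟩ := hDyn n₁ (by omega)
        have hTP' : T ⊆ P' := hTsub n₁ (le_refl _) T hTP h2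
        calc F (n₁ + 1) ≤ M2 * ∑ i ∈ T, w2 i := h1
          _ ≤ M2 * ∑ i ∈ P', w2 i := by
              apply mul_le_mul_of_nonneg_left _ (by linarith)
              apply Finset.sum_le_sum_of_subset_of_nonneg hTP'
              intro i hi _
              exact hw2nn i (hP'P hi)
      set Θ' : ℝ := D2 * F n₁ with hΘ'def
      have hΘ'mem : ∀ i ∈ P', w2 i ≤ Θ' := by
        intro i hi
        rw [hP'def, Finset.mem_filter] at hi
        exact hi.2
      have hanch' : D2 * F (n₁ + 1) ≤ R * Θ' := by
        have := hcontr n₁ (by omega)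
        calc D2 * F (n₁ + 1) ≤ D2 * (R * F n₁) := by
              apply mul_le_mul_of_nonneg_left this (le_of_lt hD2)
          _ = R * Θ' := by rw [hΘ'def]; ring
      obtain ⟨Z', hZ'0, hZ'inv, hZ'rec⟩ :=
        IH p' hP'lt P' rfl (hP'P.trans hPS) (n₁ + 1) Θ' hDyn' hB' hΘ'mem hanch'
      -- the new potential
      refine ⟨(q : ℝ) + R ^ (κ + 1) * Z', by positivity, ?_, ?_⟩
      · -- invariant : ∑_P ≤ Θ * Z
        have hsplit : ∑ i ∈ P, w2 i = ∑ i ∈ P \ P', w2 i + ∑ i ∈ P', w2 i :=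
          (Finset.sum_sdiff hP'P).symm
        have hcard' : (P \ P').card = q := by
          rw [Finset.card_sdiff_of_subset hP'P]; omega
        have h1 : ∑ i ∈ P \ P', w2 i ≤ (q : ℝ) * Θ := by
          calc ∑ i ∈ P \ P', w2 i ≤ (P \ P').card • Θ := by
                apply Finset.sum_le_card_nsmul
                intro i hi
                exact hΘ i (Finset.mem_sdiff.1 hi).1
            _ = (q : ℝ) * Θ := by rw [hcard']; simp [nsmul_eq_mul]
        have hΘ'Θ : Θ' ≤ R ^ (κ + 1) * Θ := by
          have e1 : Θ' ≤ R ^ κ * (D2 * F n₀) := by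
            rw [hΘ'def]
            calc D2 * F n₁ ≤ D2 * (R ^ κ * F n₀) := by
                  apply mul_le_mul_of_nonneg_left hFn₁ (le_of_lt hD2)
              _ = R ^ κ * (D2 * F n₀) := by ring
          calc Θ' ≤ R ^ κ * (D2 * F n₀) := e1
            _ ≤ R ^ κ * (R * Θ) := by
                apply mul_le_mul_of_nonneg_left hanch (by positivity)
            _ = R ^ (κ + 1) * Θ := by ring
        have h2 : ∑ i ∈ P', w2 i ≤ R ^ (κ + 1) * Θ * Z' := by
          calc ∑ i ∈ P', w2 i ≤ Θ' * Z' := hZ'inv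
            _ ≤ R ^ (κ + 1) * Θ * Z' := mul_le_mul_of_nonneg_right hΘ'Θ hZ'0
        rw [hsplit]
        calc ∑ i ∈ P \ P', w2 i + ∑ i ∈ P', w2 i
            ≤ (q : ℝ) * Θ + R ^ (κ + 1) * Θ * Z' := by linarith
          _ = Θ * ((q : ℝ) + R ^ (κ + 1) * Z') := by ring
      · -- recovery bound
        intro N hN
        -- the constraint for κ ≥ 1
        have hcon : κ = 0 ∨ 1 ≤ R ^ κ * ((q : ℝ) + R * Z') := by
          rcases Nat.eq_zero_or_pos κ with hκ0 | hκpos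
          · exact Or.inl hκ0
          · right
            have hFn₀pos : 0 < F n₀ := by
              rcases eq_or_lt_of_le (hFnn n₀) with hF0 | hF0
              · exfalso
                have h0 : D2 * (R ^ 0 * F n₀) < w2 j₀ := by
                  rw [← hF0]; simpa using hb2pos
                have hle0 : κ ≤ 0 := by rw [hκdef]; exact Nat.find_le h0
                omega
              · exact hF0
            have hκm : ¬ (D2 * (R ^ (κ - 1) * F n₀) < w2 j₀) :=
              Nat.find_min hex (by omega)
            push_neg at hκm
            -- ∑_P ≤ D2 F n₀ R^{κ-1} (q + R Z')
            have hsplit : ∑ i ∈ P, w2 i = ∑ i ∈ P \ P', w2 i + ∑ i ∈ P', w2 i :=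
              (Finset.sum_sdiff hP'P).symm
            have hcard' : (P \ P').card = q := by
              rw [Finset.card_sdiff_of_subset hP'P]; omega
            have h1 : ∑ i ∈ P \ P', w2 i ≤ (q : ℝ) * (D2 * (R ^ (κ-1) * F n₀)) := by
              calc ∑ i ∈ P \ P', w2 i ≤ (P \ P').card • (D2 * (R ^ (κ-1) * F n₀)) := by
                    apply Finset.sum_le_card_nsmul
                    intro i hi
                    calc w2 i ≤ w2 j₀ := hmax i (Finset.mem_sdiff.1 hi).1
                      _ ≤ D2 * (R ^ (κ-1) * F n₀) := hκm
                _ = (q : ℝ) * (D2 * (R ^ (κ-1) * F n₀)) := by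
                    rw [hcard']; simp [nsmul_eq_mul]
            have h2 : ∑ i ∈ P', w2 i ≤ R ^ κ * (D2 * F n₀) * Z' := by
              calc ∑ i ∈ P', w2 i ≤ Θ' * Z' := hZ'inv
                _ ≤ R ^ κ * (D2 * F n₀) * Z' := by
                    apply mul_le_mul_of_nonneg_right _ hZ'0
                    rw [hΘ'def]
                    calc D2 * F n₁ ≤ D2 * (R ^ κ * F n₀) := by
                          apply mul_le_mul_of_nonneg_left hFn₁ (le_of_lt hD2)
                      _ = R ^ κ * (D2 * F n₀) := by ring
            have hRκ : R ^ κ = R ^ (κ - 1) * R := by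
              rw [← pow_succ]
              congr 1
              omega
            have hstep : F n₀ ≤ F n₀ * (R ^ κ * ((q:ℝ) + R * Z')) := by
              calc F n₀ ≤ M2 * ∑ i ∈ P, w2 i := hB
                _ ≤ M2 * ((q : ℝ) * (D2 * (R ^ (κ-1) * F n₀))
                      + R ^ κ * (D2 * F n₀) * Z') := by
                    apply mul_le_mul_of_nonneg_left _ (by linarith)
                    rw [hsplit]; linarith
                _ = (D2 * M2) * F n₀ * (R ^ (κ-1) * ((q:ℝ) + R * Z')) := by
                    rw [hRκ]; ring
                _ = F n₀ * (R ^ κ * ((q:ℝ) + R * Z')) := by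
                    rw [← hRdef, hRκ]; ring
            have := (mul_le_mul_iff_right₀ hFn₀pos).1 (by
              calc F n₀ * 1 = F n₀ := by ring
                _ ≤ F n₀ * (R ^ κ * ((q:ℝ) + R * Z')) := hstep)
            linarith [this]
        have hmi := main_ineq hR0 hR1 q κ hq1 Z' hZ'0 hcon
        -- transfer the iteration bound
        apply hZ'rec N
        have hle : ((n₁:ℝ) + 1) + (c * p' - lnp Z' / ℓ)
            ≤ (n₀ : ℝ) + (c * p - lnp ((q : ℝ) + R ^ (κ + 1) * Z') / ℓ) := by
          have hcast : (p : ℝ) = (p' : ℝ) + (q : ℝ) := by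
            rw [hpq]; push_cast; ring
          have hn₁cast : (n₁ : ℝ) = (n₀ : ℝ) + (κ : ℝ) := by
            rw [hn₁def]; push_cast; ring
          rw [hcast, hn₁cast]
          have h2 : (((κ:ℝ) + 1) * ℓ + (lnp ((q : ℝ) + R ^ (κ + 1) * Z') - lnp Z'))
              ≤ c * q * ℓ := by
            have he : c * q * ℓ = (q:ℝ) * (Real.log 4 + ℓ) := by
              calc c * q * ℓ = (c * ℓ) * q := by ring
                _ = (Real.log 4 + ℓ) * q := by rw [hcℓ]
                _ = (q:ℝ) * (Real.log 4 + ℓ) := by ring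
            rw [he]
            linarith [hmi]
          have h5 : (lnp ((q : ℝ) + R ^ (κ + 1) * Z') - lnp Z') / ℓ
              ≤ c * q - ((κ:ℝ) + 1) := by
            rw [div_le_iff₀ hℓpos]
            nlinarith [h2]
          have h6 : lnp ((q : ℝ) + R ^ (κ + 1) * Z') / ℓ - lnp Z' / ℓ
              = (lnp ((q : ℝ) + R ^ (κ + 1) * Z') - lnp Z') / ℓ := (sub_div _ _ _).symm
          linarith [h5, h6.le, h6.ge]
        push_cast
        push_cast at hle
        linarith [hN, hle]
end CoSaMPAux

open CoSaMPAux

/-- Theorem 1: with noiseless measurements `y = A x_S`, CoSaMP recovers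
`x_S` exactly in `⌈cK⌉` iterations, where `c = ln(4/ρ_{4K}²)/ln(1/ρ_{4K}²)`. -/
theorem cosamp_convergence
    {m d K : ℕ} (hK : 0 < K)
    (A : Matrix (Fin m) (Fin d) ℝ) (xS : Fin d → ℝ)
    (δ3 δ4 ρ4 c : ℝ)
    (hxS : (supp xS).card ≤ K)
    (hRIP3 : RIP A (3 * K) δ3) (hRIP4 : RIP A (4 * K) δ4)
    (hρ4 : ρ4 = Real.sqrt (2 * δ4 ^ 2 * (1 + 2 * δ4 ^ 2) / (1 - δ4 ^ 2)))
    (hρ4lt : ρ4 < 1)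
    (hc : c = Real.log (4 / ρ4 ^ 2) / Real.log (1 / ρ4 ^ 2))
    (X : ℕ → Fin d → ℝ) (hX0 : X 0 = 0)
    (hsteps : ∀ i : ℕ, CoSaMPStep K A (A.mulVec xS) (X i) (X (i + 1))) :
    X ⌈c * K⌉₊ = xS := by
  classical
  have hδ4pos : 0 < δ4 := hRIP4.1
  have hδ4lt : δ4 < 1 := hRIP4.2.1
  have hden : (0:ℝ) < 1 - δ4 ^ 2 := by nlinarith
  obtain ⟨D2, hD2def⟩ : ∃ D2 : ℝ, D2 = 2 * δ4 ^ 2 := ⟨_, rfl⟩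
  obtain ⟨M2, hM2def⟩ : ∃ M2 : ℝ, M2 = (1 + 2 * δ4 ^ 2) / (1 - δ4 ^ 2) := ⟨_, rfl⟩
  obtain ⟨R, hRdef0⟩ : ∃ R : ℝ, R = ρ4 ^ 2 := ⟨_, rfl⟩
  have hρ4sq : ρ4 ^ 2 = 2 * δ4 ^ 2 * (1 + 2 * δ4 ^ 2) / (1 - δ4 ^ 2) := by
    rw [hρ4]
    exact Real.sq_sqrt (by positivity)
  have hRdef : R = D2 * M2 := by
    rw [hRdef0, hρ4sq, hD2def, hM2def]
    field_simp
  have hM2ge1 : 1 ≤ M2 := by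
    rw [hM2def, le_div_iff₀ hden]
    nlinarith
  have hD2pos : 0 < D2 := by rw [hD2def]; positivity
  have hR0 : 0 < R := by
    rw [hRdef]
    nlinarith
  have hρ4nn : 0 ≤ ρ4 := by rw [hρ4]; exact Real.sqrt_nonneg _
  have hR1 : R < 1 := by
    rw [hRdef0]
    nlinarith
  -- the vector data
  obtain ⟨S, hSdef⟩ : ∃ S : Finset (Fin d), S = supp xS := ⟨_, rfl⟩
  obtain ⟨w2, hw2def⟩ : ∃ w2 : Fin d → ℝ, w2 = fun i => xS i ^ 2 := ⟨_, rfl⟩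
  have hpos : ∀ i ∈ S, 0 < w2 i := by
    intro i hi
    rw [hSdef] at hi
    have : xS i ≠ 0 := mem_supp.1 hi
    rw [hw2def]
    exact lt_of_le_of_ne (sq_nonneg _) (Ne.symm (pow_ne_zero 2 this))
  obtain ⟨F, hFdef⟩ : ∃ F : ℕ → ℝ, F = fun n => nsq (xS - X n) := ⟨_, rfl⟩
  have hFnn : ∀ n, 0 ≤ F n := by
    intro n; rw [hFdef]; exact nsq_nonneg _
  -- sparsity of iterates
  have hsuppX : ∀ n, (supp (X n)).card ≤ K := by
    intro n
    cases n with
    | zero =>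
      rw [hX0, supp_zero]
      simp
    | succ n =>
      obtain ⟨h, S', u, hhcard, hgmax, hLS, hS'sub, hS'card, humax, hxnext⟩ := hsteps n
      have : supp (X (n+1)) ⊆ S' := by
        rw [hxnext]; exact supp_restrict_subset u S'
      calc (supp (X (n+1))).card ≤ S'.card := Finset.card_le_card this
        _ = K := hS'card
  -- the dynamics
  have hDyn : ∀ n : ℕ, 0 ≤ n → ∃ T, T ⊆ S ∧ F (n+1) ≤ M2 * ∑ i ∈ T, w2 i ∧
      ∑ i ∈ T, w2 i ≤ D2 * F n := by
    intro n _
    obtain ⟨T, hTS, h1, h2⟩ := key_step hRIP4 hxS (hsuppX n) (hsteps n)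
    rw [← hSdef] at hTS
    have hsum : ssq T xS = ∑ i ∈ T, w2 i := by
      rw [hw2def]; rfl
    refine ⟨T, hTS, ?_, ?_⟩
    · rw [← hsum, hFdef, hM2def]
      exact h1
    · rw [← hsum, hFdef, hD2def]
      exact h2
  -- initial premises
  obtain ⟨Θ, hΘdef⟩ : ∃ Θ : ℝ, Θ = ∑ i ∈ S, w2 i := ⟨_, rfl⟩
  have hw2nn : ∀ i, 0 ≤ w2 i := by
    intro i; rw [hw2def]; exact sq_nonneg _
  have hΘnn : 0 ≤ Θ := by
    rw [hΘdef]; exact Finset.sum_nonneg (fun i _ => hw2nn i)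
  have hF0 : F 0 = Θ := by
    rw [hFdef, hΘdef]
    show nsq (xS - X 0) = ∑ i ∈ S, w2 i
    rw [hX0, sub_zero, nsq_eq_ssq_add_compl S]
    have h2 : ssq Sᶜ xS = 0 := by
      apply Finset.sum_eq_zero
      intro i hi
      have hiS : i ∉ S := by simpa using hi
      rw [hSdef] at hiS
      rw [not_mem_supp hiS]
      ring
    rw [h2, add_zero, hw2def]
    rfl
  have hB : F 0 ≤ M2 * ∑ i ∈ S, w2 i := by
    rw [hF0, ← hΘdef]
    nlinarith [hΘnn, hM2ge1]
  have hΘmem : ∀ i ∈ S, w2 i ≤ Θ := by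
    intro i hi
    rw [hΘdef]
    exact Finset.single_le_sum (f := w2) (fun j _ => hw2nn j) hi
  have hanch : D2 * F 0 ≤ R * Θ := by
    rw [hF0, hRdef]
    nlinarith [hΘnn, hM2ge1, hD2pos]
  obtain ⟨Z, hZ0, hZinv, hZrec⟩ :=
    seq_lemma S w2 hpos F hFnn D2 M2 R hD2pos hM2ge1 hRdef hR0 hR1
      S.card S rfl (subset_refl S) 0 Θ hDyn hB hΘmem hanch
  -- conclude
  have hℓpos : 0 < Real.log (1/R) := Real.log_pos (by rw [lt_div_iff₀ hR0]; linarith)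
  have hcpos : 0 < Real.log (4/R) / Real.log (1/R) := by
    apply div_pos _ hℓpos
    apply Real.log_pos
    rw [lt_div_iff₀ hR0]; linarith
  have hceq : c = Real.log (4/R) / Real.log (1/R) := by rw [hc, hRdef0]
  have hFN : F ⌈c * K⌉₊ = 0 := by
    apply hZrec
    have h1 : Real.log (4/R) / Real.log (1/R) * S.card ≤ c * K := by
      rw [hceq]
      apply mul_le_mul_of_nonneg_left _ (le_of_lt hcpos)
      have : S.card ≤ K := by rw [hSdef]; exact hxS
      exact_mod_cast this
    have h2 : c * K ≤ (⌈c * K⌉₊ : ℝ) := Nat.le_ceil _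
    have h3 : 0 ≤ lnp Z / Real.log (1/R) := div_nonneg (lnp_nonneg Z) (le_of_lt hℓpos)
    push_cast
    linarith
  rw [hFdef] at hFN
  have : xS - X ⌈c * K⌉₊ = 0 := (nsq_eq_zero_iff _).1 hFN
  funext i
  have hi := congrFun this i
  simp only [Pi.sub_apply, Pi.zero_apply] at hi
  linarith
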